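/- arXiv:2109.07948 — 10 statements merged into one kernel-verified Lean document; each statement's English description precedes it below -/
import Mathlib

section
/- The incomparability graph of a poset contains no induced cycle of length at least five. -/
/-- The incomparability graph of a poset: edges are pairs of incomparable elements. -/
def incompGraph (V : Type*) [PartialOrder V] : SimpleGraph V where
  Adj a b := ¬ a ≤ b ∧ ¬ b ≤ a
  symm := ⟨by intro a b h; exact ⟨h.2, h.1⟩⟩
  loopless := ⟨by intro a h; exact h.1 le_rfl⟩

private lemma chainStep {V : Type*} [PartialOrder V] {a b c d : V}
    (hac : a < c) (hab : ¬ a ≤ b) (hcd : ¬ d ≤ c)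
    (had : a ≤ d ∨ d ≤ a) (hbd : b ≤ d ∨ d ≤ b) (hne : b ≠ d) : b < d := by
  have had' : a ≤ d := by
    rcases had with h | h
    · exact h
    · exact absurd (h.trans hac.le) hcd
  have hbd' : b ≤ d := by
    rcases hbd with h | h
    · exact h
    · exact absurd (had'.trans h) hab
  exact lt_of_le_of_ne hbd' hne

private lemma auxFalse {V : Type*} [PartialOrder V] (l : ℕ) (hl : 5 ≤ l) (x : Fin l → V)
    (hinj : Function.Injective x)
    (h : ∀ i j : Fin l, (¬ x i ≤ x j ∧ ¬ x j ≤ x i) ↔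
        ((i : ℕ) + 1 = j ∨ (j : ℕ) + 1 = i ∨
          ((i : ℕ) = 0 ∧ (j : ℕ) = l - 1) ∨ ((j : ℕ) = 0 ∧ (i : ℕ) = l - 1)))
    (h02 : x ⟨0, by omega⟩ < x ⟨2, by omega⟩) : False := by
  obtain ⟨m, rfl⟩ : ∃ m, l = m + 5 := ⟨l - 5, by omega⟩
  have hxe : ∀ {a b : ℕ} (ha : a < m + 5) (hb : b < m + 5), a = b →
      x ⟨a, ha⟩ = x ⟨b, hb⟩ := by
    intro a b ha hb hab; subst hab; rfl
  have hincomp : ∀ {a b : ℕ} (ha : a < m + 5) (hb : b < m + 5),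
      (a + 1 = b ∨ b + 1 = a ∨ (a = 0 ∧ b = m + 4) ∨ (b = 0 ∧ a = m + 4)) →
      ¬ x ⟨a, ha⟩ ≤ x ⟨b, hb⟩ ∧ ¬ x ⟨b, hb⟩ ≤ x ⟨a, ha⟩ := by
    intro a b ha hb hc
    refine (h ⟨a, ha⟩ ⟨b, hb⟩).2 ?_
    simp only [Fin.val_mk]
    omega
  have hcomp : ∀ {a b : ℕ} (ha : a < m + 5) (hb : b < m + 5),
      ¬ (a + 1 = b ∨ b + 1 = a ∨ (a = 0 ∧ b = m + 4) ∨ (b = 0 ∧ a = m + 4)) →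
      x ⟨a, ha⟩ ≤ x ⟨b, hb⟩ ∨ x ⟨b, hb⟩ ≤ x ⟨a, ha⟩ := by
    intro a b ha hb hc
    by_contra hcon
    push_neg at hcon
    have := (h ⟨a, ha⟩ ⟨b, hb⟩).1 hcon
    simp only [Fin.val_mk] at this
    omega
  have hnex : ∀ {a b : ℕ} (ha : a < m + 5) (hb : b < m + 5), a ≠ b →
      x ⟨a, ha⟩ ≠ x ⟨b, hb⟩ := by
    intro a b ha hb hab e
    have := hinj e
    rw [Fin.mk.injEq] at this
    omega
  -- the forward chain
  have P : ∀ k (hk : k + 2 < m + 5), x ⟨k, by omega⟩ < x ⟨k + 2, hk⟩ := by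
    intro k
    induction k with
    | zero => intro hk; exact h02
    | succ k ih =>
      intro hk
      have hk' : k + 2 < m + 5 := by omega
      exact chainStep (ih hk')
        (hincomp (by omega) (by omega) (by omega)).1
        (hincomp (a := k + 2) (b := k + 3) (by omega) (by omega) (by omega)).2
        (hcomp (a := k) (b := k + 3) (by omega) (by omega) (by omega))
        (hcomp (a := k + 1) (b := k + 3) (by omega) (by omega) (by omega))
        (hnex (by omega) (by omega) (by omega))
  -- wrap-around steps
  have W1 : x ⟨m + 3, by omega⟩ < x ⟨0, by omega⟩ :=
    chainStep (P (m + 2) (by omega))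
      (hincomp (a := m + 2) (b := m + 3) (by omega) (by omega) (by omega)).1
      (hincomp (a := m + 4) (b := 0) (by omega) (by omega) (by omega)).2
      (hcomp (a := m + 2) (b := 0) (by omega) (by omega) (by omega))
      (hcomp (a := m + 3) (b := 0) (by omega) (by omega) (by omega))
      (hnex (by omega) (by omega) (by omega))
  have W2 : x ⟨m + 4, by omega⟩ < x ⟨1, by omega⟩ :=
    chainStep W1
      (hincomp (a := m + 3) (b := m + 4) (by omega) (by omega) (by omega)).1
      (hincomp (a := 0) (b := 1) (by omega) (by omega) (by omega)).2
      (hcomp (a := m + 3) (b := 1) (by omega) (by omega) (by omega))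
      (hcomp (a := m + 4) (b := 1) (by omega) (by omega) (by omega))
      (hnex (by omega) (by omega) (by omega))
  -- combined: x_k < x_{(k+2) mod l} for every k
  have K : ∀ k (hk : k < m + 5),
      x ⟨k, hk⟩ < x ⟨(k + 2) % (m + 5), Nat.mod_lt _ (by omega)⟩ := by
    intro k hk
    rcases (by omega : k + 2 < m + 5 ∨ k = m + 3 ∨ k = m + 4) with h1 | rfl | rfl
    · exact lt_of_lt_of_eq (P k h1) (hxe _ _ (Nat.mod_eq_of_lt h1).symm)
    · exact lt_of_lt_of_eq W1 (hxe _ _ (Nat.mod_self (m + 5)).symm)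
    · have e1 : (m + 4 + 2) % (m + 5) = 1 := by
        have : m + 4 + 2 = (m + 5) + 1 := by omega
        rw [this, Nat.add_mod_left]
        exact Nat.mod_eq_of_lt (by omega)
      exact lt_of_lt_of_eq W2 (hxe _ _ e1.symm)
  -- iterate around the cycle
  have chain : ∀ n : ℕ, x ⟨0, by omega⟩ < x ⟨(2 * (n + 1)) % (m + 5), Nat.mod_lt _ (by omega)⟩ := by
    intro n
    induction n with
    | zero =>
      exact lt_of_lt_of_eq h02 (hxe _ _ (by rw [Nat.mod_eq_of_lt (by omega)]))
    | succ n ih =>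
      have hK := K ((2 * (n + 1)) % (m + 5)) (Nat.mod_lt _ (by omega))
      have e2 : ((2 * (n + 1)) % (m + 5) + 2) % (m + 5) = (2 * (n + 1 + 1)) % (m + 5) := by
        rw [Nat.mod_add_mod]
        congr 1
      exact ih.trans (lt_of_lt_of_eq hK (hxe _ _ e2))
  have hfin := chain (m + 4)
  have e0 : (2 * (m + 4 + 1)) % (m + 5) = 0 := by
    simp [Nat.mul_mod_right]
  exact absurd (lt_of_lt_of_eq hfin (hxe _ _ e0)) (lt_irrefl _)

theorem stmt1 {V : Type*} [PartialOrder V] (l : ℕ) (hl : 5 ≤ l) (x : Fin l → V)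
    (hinj : Function.Injective x) :
    ¬ (∀ i j : Fin l, (incompGraph V).Adj (x i) (x j) ↔
        ((i : ℕ) + 1 = j ∨ (j : ℕ) + 1 = i ∨
          ((i : ℕ) = 0 ∧ (j : ℕ) = l - 1) ∨ ((j : ℕ) = 0 ∧ (i : ℕ) = l - 1))) := by
  intro h
  have h' : ∀ i j : Fin l, (¬ x i ≤ x j ∧ ¬ x j ≤ x i) ↔
      ((i : ℕ) + 1 = j ∨ (j : ℕ) + 1 = i ∨
        ((i : ℕ) = 0 ∧ (j : ℕ) = l - 1) ∨ ((j : ℕ) = 0 ∧ (i : ℕ) = l - 1)) :=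
    fun i j => h i j
  have h0 : (0 : ℕ) < l := by omega
  have h2 : (2 : ℕ) < l := by omega
  have hne02 : x ⟨0, h0⟩ ≠ x ⟨2, h2⟩ := by
    intro e
    have := hinj e
    rw [Fin.mk.injEq] at this
    omega
  have hcomp02 : x ⟨0, h0⟩ ≤ x ⟨2, h2⟩ ∨ x ⟨2, h2⟩ ≤ x ⟨0, h0⟩ := by
    by_contra hcon
    push_neg at hcon
    have := (h' ⟨0, h0⟩ ⟨2, h2⟩).1 hcon
    simp only [Fin.val_mk] at this
    omega
  rcases hcomp02 with hle | hle
  · exact auxFalse l hl x hinj h' (lt_of_le_of_ne hle hne02)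
  · refine auxFalse (V := Vᵒᵈ) l hl (fun i => OrderDual.toDual (x i))
      (fun a b e => hinj (OrderDual.toDual.injective e)) ?_ ?_
    · intro i j
      exact (and_comm.trans (h' i j))
    · exact OrderDual.toDual_lt_toDual.mpr (lt_of_le_of_ne hle hne02.symm)
end

section
/- Let P be a poset whose incomparability graph G is connected, and let a < b be a covering relation in P (i.e., a < b and there is no z with a < z < b). Then the graphic distance between a and b in G satisfies 2 ≤ d_G(a,b) ≤ 3. -/
theorem stmt2 {V : Type*} [PartialOrder V]
    (hconn : (incompGraph V).Connected) (a b : V) (hcov : a ⋖ b) :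
    2 ≤ (incompGraph V).dist a b ∧ (incompGraph V).dist a b ≤ 3 := by
  classical
  have hab : a ≤ b := hcov.le
  have hne : a ≠ b := hcov.lt.ne
  constructor
  · -- lower bound
    have hpos : 0 < (incompGraph V).dist a b := hconn.pos_dist_of_ne hne
    have h1 : (incompGraph V).dist a b ≠ 1 := by
      intro h
      have : (incompGraph V).Adj a b := SimpleGraph.dist_eq_one_iff_adj.mp h
      exact this.1 hab
    omega
  · -- upper bound
    by_cases h1 : ∃ x, (incompGraph V).Adj a x ∧ (incompGraph V).Adj x b
    · obtain ⟨x, hax, hxb⟩ := h1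
      let p : (incompGraph V).Walk a b :=
        SimpleGraph.Walk.cons hax (SimpleGraph.Walk.cons hxb SimpleGraph.Walk.nil)
      refine (SimpleGraph.dist_le p).trans ?_
      simp [p, SimpleGraph.Walk.length_cons]
    by_cases h2 : ∃ x y, (incompGraph V).Adj a x ∧ (incompGraph V).Adj x y ∧
        (incompGraph V).Adj y b
    · obtain ⟨x, y, hax, hxy, hyb⟩ := h2
      let p : (incompGraph V).Walk a b :=
        SimpleGraph.Walk.cons hax (SimpleGraph.Walk.cons hxy
          (SimpleGraph.Walk.cons hyb SimpleGraph.Walk.nil))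
      refine (SimpleGraph.dist_le p).trans ?_
      simp [p, SimpleGraph.Walk.length_cons]
    · exfalso
      push_neg at h1 h2
      -- U is a union of the up-set of b and the neighbors of b; it is closed under
      -- adjacency, contains b but not a, contradicting connectivity.
      set U : Set V := {w | b ≤ w ∨ (incompGraph V).Adj b w} with hU
      have closure : ∀ u w : V, u ∈ U → (incompGraph V).Adj u w → w ∈ U := by
        intro u w hu huw
        by_cases hbw : b ≤ w
        · exact Or.inl hbw
        rcases hu with hbu | hbu
        · -- b ≤ u
          right
          refine ⟨hbw, fun hwb => huw.2 (hwb.trans hbu)⟩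
        · -- u incomparable to b
          -- then w ≤ b (since w comparable to b and ¬ b ≤ w)
          by_cases hwb : w ≤ b
          · -- show contradiction
            have hub : (incompGraph V).Adj u b := ⟨hbu.2, hbu.1⟩
            -- ¬ Adj a u (else h1 with x = u)
            have hau : ¬ (incompGraph V).Adj a u := fun h => h1 u h hub
            -- so a comparable to u; u ≤ a impossible since u ≤ a ≤ b contra ¬ u ≤ b
            have hua : ¬ u ≤ a := fun h => hbu.2 (h.trans hab)
            have halu : a ≤ u := by
              by_contra h
              exact hau ⟨h, hua⟩
            -- ¬ Adj a w (else h2 with x = w, y = u)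
            have haw : ¬ (incompGraph V).Adj a w :=
              fun h => h2 w u h huw.symm hub
            -- w ≠ a: if w = a then Adj u a = Adj a u
            have hwa : w ≠ a := by
              rintro rfl
              exact hau huw.symm
            -- a ≤ w leads to a < w < b contradicting covering
            have hwlea : w ≤ a := by
              by_contra h
              have haw' : a ≤ w := by
                by_contra h'
                exact haw ⟨h', h⟩
              have hwb' : w ≠ b := fun h => hbw (h ▸ le_refl b)
              exact hcov.2 (lt_of_le_of_ne haw' (Ne.symm hwa)) (lt_of_le_of_ne hwb hwb')
            -- then w ≤ a ≤ u contradicting Adj u w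
            have : w ≤ u := hwlea.trans halu
            exact (huw.2 this).elim
          · exact Or.inr ⟨hbw, hwb⟩
      have walkmem : ∀ {u v : V} (_ : (incompGraph V).Walk u v), u ∈ U → v ∈ U := by
        intro u v p
        induction p with
        | nil => exact id
        | cons h p ih => intro hu; exact ih (closure _ _ hu h)
      have hbU : b ∈ U := Or.inl le_rfl
      have haU : a ∈ U := walkmem ((hconn b a).some) hbU
      rcases haU with h | h
      · exact hne (le_antisymm hab h)
      · exact h.2 hab
end

section
/- Let P be a poset and G its incomparability graph. A sequence a_0, a_1, a_2, ... of vertices forms an infinite induced path in G (with edges exactly between consecutive terms) if and only if for every i, the four vertices a_i, a_{i+1}, a_{i+2}, a_{i+3} form an induced path of G with extremities a_i and a_{i+3}. -/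
lemma incompGraph_adj {V : Type*} [PartialOrder V] (x y : V) :
    (incompGraph V).Adj x y ↔ (¬ x ≤ y ∧ ¬ y ≤ x) := Iff.rfl

lemma aux_mono {V : Type*} [PartialOrder V] (a : ℕ → V)
    (hadj : ∀ i, ¬ a i ≤ a (i+1) ∧ ¬ a (i+1) ≤ a i)
    (hc2 : ∀ i, a i < a (i+2) ∨ a (i+2) < a i)
    (hc3 : ∀ i, a i < a (i+3) ∨ a (i+3) < a i)
    (h0 : a 0 < a 2) :
    ∀ i j, i + 2 ≤ j → a i < a j := by
  have step : ∀ i, a i < a (i+2) → a (i+1) < a (i+3) := by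
    intro i h
    rcases hc2 (i+1) with h2 | h2
    · exact h2
    · exfalso
      rcases hc3 i with h3 | h3
      · exact (hadj i).1 (le_trans h3.le h2.le)
      · exact (hadj (i+2)).2 (le_trans h3.le h.le)
  have all2 : ∀ i, a i < a (i+2) := by
    intro i
    induction i with
    | zero => exact h0
    | succ n ih => exact step n ih
  have all3 : ∀ i, a i < a (i+3) := by
    intro i
    rcases hc3 i with h3 | h3
    · exact h3
    · exact absurd (le_trans h3.le (all2 i).le) (hadj (i+2)).2
  have main : ∀ d, (∀ i, a i < a (i+d+2)) ∧ (∀ i, a i < a (i+d+3)) := by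
    intro d
    induction d with
    | zero => exact ⟨all2, all3⟩
    | succ n ih =>
      refine ⟨fun i => ?_, fun i => ?_⟩
      · have heq : i + (n+1) + 2 = i + n + 3 := by omega
        rw [heq]; exact ih.2 i
      · have h1 := all2 i
        have h2 := ih.1 (i+2)
        have : i + 2 + n + 2 = i + (n+1) + 3 := by omega
        rw [this] at h2
        exact lt_trans h1 h2
  intro i j hij
  have := (main (j - i - 2)).1 i
  have heq : i + (j - i - 2) + 2 = j := by omega
  rwa [heq] at this

theorem stmt3 {V : Type*} [PartialOrder V] (a : ℕ → V) :
    (Function.Injective a ∧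
      ∀ i j : ℕ, (incompGraph V).Adj (a i) (a j) ↔ (i + 1 = j ∨ j + 1 = i)) ↔
    (∀ i : ℕ, Function.Injective (fun k : Fin 4 => a (i + k)) ∧
      ∀ k l : Fin 4, (incompGraph V).Adj (a (i + k)) (a (i + l)) ↔
        ((k : ℕ) + 1 = l ∨ (l : ℕ) + 1 = k)) := by
  constructor
  · rintro ⟨hinj, hadj⟩ i
    refine ⟨fun k l hkl => ?_, fun k l => ?_⟩
    · have := hinj hkl
      have : (k : ℕ) = l := by omega
      exact Fin.ext this
    · rw [hadj]
      constructor
      · rintro (h | h) <;> [left; right] <;> omega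
      · rintro (h | h) <;> [left; right] <;> omega
  · intro h
    -- basic facts
    have hadj1 : ∀ i, ¬ a i ≤ a (i+1) ∧ ¬ a (i+1) ≤ a i := by
      intro i
      have := ((h i).2 0 1).2 (by decide)
      simpa [incompGraph_adj] using this
    have hne : ∀ (i : ℕ) (k l : Fin 4), k ≠ l → a (i + k) ≠ a (i + l) := by
      intro i k l hkl heq
      exact hkl ((h i).1 heq)
    have hnadj : ∀ (i : ℕ) (k l : Fin 4), ¬ ((k : ℕ) + 1 = l ∨ (l : ℕ) + 1 = k) →
        (a (i + k) ≤ a (i + l) ∨ a (i + l) ≤ a (i + k)) := by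
      intro i k l hkl
      have := ((h i).2 k l)
      rw [incompGraph_adj] at this
      by_contra hc
      push_neg at hc
      exact hkl (this.1 ⟨hc.1, hc.2⟩)
    have hc2 : ∀ i, a i < a (i+2) ∨ a (i+2) < a i := by
      intro i
      have hne2 : a (i + (0 : Fin 4)) ≠ a (i + (2 : Fin 4)) := hne i 0 2 (by decide)
      have := hnadj i 0 2 (by decide)
      simp only [Fin.isValue, Fin.val_zero, Fin.val_two, Nat.add_zero] at this hne2 ⊢
      norm_num at this hne2
      rcases this with h' | h'
      · exact Or.inl (lt_of_le_of_ne h' hne2)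
      · exact Or.inr (lt_of_le_of_ne h' (Ne.symm hne2))
    have hc3 : ∀ i, a i < a (i+3) ∨ a (i+3) < a i := by
      intro i
      have hne3 : a (i + (0 : Fin 4)) ≠ a (i + (3 : Fin 4)) := hne i 0 3 (by decide)
      have := hnadj i 0 3 (by decide)
      norm_num at this hne3
      rcases this with h' | h'
      · exact Or.inl (lt_of_le_of_ne h' hne3)
      · exact Or.inr (lt_of_le_of_ne h' (Ne.symm hne3))
    -- global comparability for gaps ≥ 2
    have hcomp : ∀ i j, i + 2 ≤ j → a i < a j ∨ a j < a i := by
      rcases hc2 0 with h0 | h0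
      · intro i j hij
        exact Or.inl (aux_mono a hadj1 hc2 hc3 h0 i j hij)
      · intro i j hij
        have := aux_mono (V := Vᵒᵈ) (fun n => OrderDual.toDual (a n))
          (fun i => ⟨(hadj1 i).2, (hadj1 i).1⟩)
          (fun i => (hc2 i).symm.imp OrderDual.toDual_lt_toDual.mpr OrderDual.toDual_lt_toDual.mpr)
          (fun i => (hc3 i).symm.imp OrderDual.toDual_lt_toDual.mpr OrderDual.toDual_lt_toDual.mpr)
          (OrderDual.toDual_lt_toDual.mpr h0) i j hij
        exact Or.inr (OrderDual.toDual_lt_toDual.mp this)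
    constructor
    · intro i j hij
      by_contra hne'
      rcases Nat.lt_or_ge i j with hlt | hge
      · rcases Nat.lt_or_ge (i+1) j with h2 | h2
        · rcases hcomp i j (by omega) with h' | h'
          · exact h'.ne hij
          · exact h'.ne' hij
        · have : j = i + 1 := by omega
          subst this
          exact (hadj1 i).1 (le_of_eq hij)
      · rcases Nat.lt_or_ge (j+1) i with h2 | h2
        · rcases hcomp j i (by omega) with h' | h'
          · exact h'.ne hij.symm
          · exact h'.ne hij
        · rcases Nat.lt_or_ge j i with h3 | h3
          · have : i = j + 1 := by omega
            subst this
            exact (hadj1 j).2 (le_of_eq hij)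
          · exact hne' (by omega)
    · intro i j
      rw [incompGraph_adj]
      constructor
      · rintro ⟨h1, h2⟩
        by_contra hc
        push_neg at hc
        rcases Nat.lt_or_ge i j with hlt | hge
        · have : i + 2 ≤ j := by omega
          rcases hcomp i j this with h' | h'
          · exact h1 h'.le
          · exact h2 h'.le
        · rcases Nat.lt_or_ge j i with h3 | h3
          · have : j + 2 ≤ i := by omega
            rcases hcomp j i this with h' | h'
            · exact h2 h'.le
            · exact h1 h'.le
          · have : i = j := by omega
            subst this
            exact h1 le_rfl
      · rintro (heq | heq)
        · subst heq; exact hadj1 i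
        · subst heq
          exact ⟨(hadj1 j).2, (hadj1 j).1⟩
end

section
/- Let P = (V, ≤) be a poset, G its incomparability graph, x ∈ V, and r ∈ ℕ. Then the ball B_G(x, r) = {y ∈ V : d_G(x, y) ≤ r} is an order convex subset of P. -/
/-- A subset of a poset is order convex if it contains every element between two of its members. -/
def OrderConvex {V : Type*} [PartialOrder V] (X : Set V) : Prop :=
  ∀ x ∈ X, ∀ y ∈ X, ∀ z : V, x ≤ z → z ≤ y → z ∈ X

lemma walk_aux_below {V : Type*} [PartialOrder V] {a z : V} :
    ∀ {x : V} (p : (incompGraph V).Walk x a), a ≤ z → z ≤ x →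
      (incompGraph V).edist x z ≤ p.length := by
  intro x p
  induction p with
  | nil =>
    intro h1 h2
    have : z = _ := le_antisymm h2 h1
    subst this
    simp [SimpleGraph.edist_self]
  | @cons x x' a hadj q ih =>
    intro h1 h2
    rcases eq_or_ne z x with rfl | hzx
    · simp [SimpleGraph.edist_self]
    by_cases hc : z ≤ x'
    · have h3 : (incompGraph V).edist x' z ≤ q.length := ih h1 hc
      calc (incompGraph V).edist x z
          ≤ (incompGraph V).edist x x' + (incompGraph V).edist x' z :=
            SimpleGraph.edist_triangle
        _ ≤ 1 + q.length := by
            gcongr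
            exact le_of_eq (SimpleGraph.edist_eq_one_iff_adj.mpr hadj)
        _ = (q.cons hadj).length := by
            rw [SimpleGraph.Walk.length_cons]; push_cast; ring
    · by_cases hc' : x' ≤ z
      · exact absurd (hc'.trans h2) hadj.2
      · -- z incomparable to x'
        have hadj' : (incompGraph V).Adj x' z := ⟨hc', hc⟩
        have hq : 1 ≤ (q.length : ℕ∞) := by
          rcases Nat.eq_zero_or_pos q.length with h0 | h0
          · exfalso
            have : x' = a := q.eq_of_length_eq_zero h0
            subst this
            exact hc' h1
          · exact_mod_cast h0
        calc (incompGraph V).edist x z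
            ≤ (incompGraph V).edist x x' + (incompGraph V).edist x' z :=
              SimpleGraph.edist_triangle
          _ ≤ 1 + 1 := by
              gcongr
              · exact le_of_eq (SimpleGraph.edist_eq_one_iff_adj.mpr hadj)
              · exact le_of_eq (SimpleGraph.edist_eq_one_iff_adj.mpr hadj')
          _ ≤ 1 + q.length := by gcongr
          _ = (q.cons hadj).length := by
              rw [SimpleGraph.Walk.length_cons]; push_cast; ring

lemma walk_aux_above {V : Type*} [PartialOrder V] {b z : V} :
    ∀ {x : V} (p : (incompGraph V).Walk x b), z ≤ b → x ≤ z →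
      (incompGraph V).edist x z ≤ p.length := by
  intro x p
  induction p with
  | nil =>
    intro h1 h2
    have : z = _ := le_antisymm h1 h2
    subst this
    simp [SimpleGraph.edist_self]
  | @cons x x' b hadj q ih =>
    intro h1 h2
    rcases eq_or_ne z x with rfl | hzx
    · simp [SimpleGraph.edist_self]
    by_cases hc : x' ≤ z
    · have h3 : (incompGraph V).edist x' z ≤ q.length := ih h1 hc
      calc (incompGraph V).edist x z
          ≤ (incompGraph V).edist x x' + (incompGraph V).edist x' z :=
            SimpleGraph.edist_triangle
        _ ≤ 1 + q.length := by
            gcongr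
            exact le_of_eq (SimpleGraph.edist_eq_one_iff_adj.mpr hadj)
        _ = (q.cons hadj).length := by
            rw [SimpleGraph.Walk.length_cons]; push_cast; ring
    · by_cases hc' : z ≤ x'
      · exact absurd (h2.trans hc') hadj.1
      · have hadj' : (incompGraph V).Adj x' z := ⟨hc, hc'⟩
        have hq : 1 ≤ (q.length : ℕ∞) := by
          rcases Nat.eq_zero_or_pos q.length with h0 | h0
          · exfalso
            have : x' = b := q.eq_of_length_eq_zero h0
            subst this
            exact hc' h1
          · exact_mod_cast h0
        calc (incompGraph V).edist x z
            ≤ (incompGraph V).edist x x' + (incompGraph V).edist x' z :=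
              SimpleGraph.edist_triangle
          _ ≤ 1 + 1 := by
              gcongr
              · exact le_of_eq (SimpleGraph.edist_eq_one_iff_adj.mpr hadj)
              · exact le_of_eq (SimpleGraph.edist_eq_one_iff_adj.mpr hadj')
          _ ≤ 1 + q.length := by gcongr
          _ = (q.cons hadj).length := by
              rw [SimpleGraph.Walk.length_cons]; push_cast; ring

theorem stmt6 {V : Type*} [PartialOrder V] (x : V) (r : ℕ) :
    OrderConvex {y : V | (incompGraph V).edist x y ≤ (r : ℕ∞)} := by
  intro a ha b hb z haz hzb
  simp only [Set.mem_setOf_eq] at ha hb ⊢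
  by_cases hzx : z ≤ x
  · obtain ⟨p, hp⟩ := SimpleGraph.exists_walk_of_edist_ne_top
      (ne_top_of_le_ne_top (ENat.coe_ne_top r) ha)
    calc (incompGraph V).edist x z ≤ p.length := walk_aux_below p haz hzx
      _ = (incompGraph V).edist x a := hp
      _ ≤ r := ha
  · by_cases hxz : x ≤ z
    · obtain ⟨p, hp⟩ := SimpleGraph.exists_walk_of_edist_ne_top
        (ne_top_of_le_ne_top (ENat.coe_ne_top r) hb)
      calc (incompGraph V).edist x z ≤ p.length := walk_aux_above p hzb hxz
        _ = (incompGraph V).edist x b := hp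
        _ ≤ r := hb
    · -- x and z incomparable: distance 1
      have hadj : (incompGraph V).Adj x z := ⟨hxz, hzx⟩
      have h1 : (incompGraph V).edist x z = 1 :=
        SimpleGraph.edist_eq_one_iff_adj.mpr hadj
      rw [h1]
      rcases Nat.eq_zero_or_pos r with rfl | hr
      · exfalso
        have hxa : (incompGraph V).edist x a = 0 := by
          simpa using le_antisymm ha (zero_le)
        have : a = x := (SimpleGraph.edist_eq_zero_iff.mp hxa).symm
        subst this
        exact hxz haz
      · exact_mod_cast hr
end

section
/- Let P = (V, ≤) be a poset, G its incomparability graph, and x < z < y elements of V. Then max(d_G(x,z), d_G(z,y)) ≤ d_G(x,y) ≤ d_G(x,z) + d_G(z,y) ≤ d_G(x,y) + 2. -/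
private lemma key {V : Type*} [PartialOrder V] {x y : V} (p : (incompGraph V).Walk x y) :
    ∀ z : V, x < z → z ≤ y →
    ∃ (q : (incompGraph V).Walk x z) (r : (incompGraph V).Walk z y),
      q.length ≤ p.length ∧ r.length ≤ p.length ∧ q.length + r.length ≤ p.length + 2 := by
  induction p with
  | nil => intro z hxz hzy; exact absurd (lt_of_lt_of_le hxz hzy) (lt_irrefl _)
  | @cons a w y h q ih =>
    intro z hxz hzy
    by_cases hwz : w ≤ z
    ·
      have hwltz : w < z := by
        rcases lt_or_eq_of_le hwz with h1 | h1
        · exact h1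
        · subst h1; exact absurd hxz.le h.1
      obtain ⟨q1, r1, hq1, hr1, hsum⟩ := ih z hwltz hzy
      exact ⟨SimpleGraph.Walk.cons h q1, r1, by simpa using Nat.succ_le_succ hq1,
        le_trans hr1 (by simp), by simp only [SimpleGraph.Walk.length_cons]; omega⟩
    · by_cases hzw : z ≤ w
      · -- z ≤ w, so a < z ≤ w contradicts Adj a w
        exact absurd (le_trans hxz.le hzw) h.1
      · -- w incomparable to z : edge w z
        have hadj : (incompGraph V).Adj w z := ⟨hwz, hzw⟩
        have hqlen : 1 ≤ q.length := by
          rcases Nat.eq_zero_or_pos q.length with h0 | h0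
          · exfalso
            have := q.eq_of_length_eq_zero h0
            subst this
            exact hzw hzy
          · exact h0
        refine ⟨SimpleGraph.Walk.cons h (SimpleGraph.Walk.cons hadj SimpleGraph.Walk.nil),
          SimpleGraph.Walk.cons hadj.symm q, ?_, ?_, ?_⟩ <;>
          simp only [SimpleGraph.Walk.length_cons, SimpleGraph.Walk.length_nil] <;> omega

theorem stmt9 {V : Type*} [PartialOrder V] (x z y : V)
    (hxz : x < z) (hzy : z < y)
    (hrxz : (incompGraph V).Reachable x z)
    (hrzy : (incompGraph V).Reachable z y)
    (hrxy : (incompGraph V).Reachable x y) :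
    max ((incompGraph V).dist x z) ((incompGraph V).dist z y) ≤ (incompGraph V).dist x y ∧
    (incompGraph V).dist x y ≤ (incompGraph V).dist x z + (incompGraph V).dist z y ∧
    (incompGraph V).dist x z + (incompGraph V).dist z y ≤ (incompGraph V).dist x y + 2 := by
  obtain ⟨p, hp⟩ := hrxy.exists_walk_length_eq_dist
  obtain ⟨q, r, hq, hr, hsum⟩ := key p z hxz hzy.le
  obtain ⟨q', hq'⟩ := hrxz.exists_walk_length_eq_dist
  obtain ⟨r', hr'⟩ := hrzy.exists_walk_length_eq_dist
  have t1 : (incompGraph V).dist x z ≤ q.length := SimpleGraph.dist_le q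
  have t2 : (incompGraph V).dist z y ≤ r.length := SimpleGraph.dist_le r
  have t3 : (incompGraph V).dist x y ≤ (q'.append r').length := SimpleGraph.dist_le _
  rw [SimpleGraph.Walk.length_append, hq', hr'] at t3
  refine ⟨max_le (by omega) (by omega), t3, by omega⟩
end

section
/- Let P = (V, ≤) be a poset, G its incomparability graph, and x < y with x connected to y in G, d_G(x,y) = r ≥ 2. If x_0 = x, x_1, ..., x_r = y is a shortest path in G from x to y, then there exists an index i with 0 < i < r such that z is incomparable to x_i, for any fixed z with x < z < y. -/
theorem stmt10 {V : Type*} [PartialOrder V] (x y z : V) (r : ℕ)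
    (hxy : x < y) (hxz : x < z) (hzy : z < y)
    (hr : r = (incompGraph V).dist x y) (hr2 : 2 ≤ r)
    (p : ℕ → V) (hp0 : p 0 = x) (hpr : p r = y)
    (hadj : ∀ i < r, (incompGraph V).Adj (p i) (p (i + 1))) :
    ∃ i : ℕ, 0 < i ∧ i < r ∧ ¬ z ≤ p i ∧ ¬ p i ≤ z := by
  classical
  by_contra hcon
  have hcomp : ∀ i, 0 < i → i < r → z ≤ p i ∨ p i ≤ z := by
    intro i h1 h2
    by_contra hc
    push_neg at hc
    exact hcon ⟨i, h1, h2, hc.1, hc.2⟩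
  have hex : ∃ i, z ≤ p i := ⟨r, by rw [hpr]; exact hzy.le⟩
  set i := Nat.find hex with hi
  have hspec : z ≤ p i := Nat.find_spec hex
  have hile : i ≤ r := Nat.find_le (by rw [hpr]; exact hzy.le)
  have hipos : 0 < i := by
    rcases Nat.eq_zero_or_pos i with h0 | h
    · exfalso; apply hxz.not_ge; rw [← hp0]; rw [h0] at hspec; exact hspec
    · exact h
  set j := i - 1 with hj
  have hji : j + 1 = i := Nat.succ_pred_eq_of_pos hipos
  have hjr : j < r := lt_of_lt_of_le (by omega) hile
  have hpjz : p j ≤ z := by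
    rcases Nat.eq_zero_or_pos j with h0 | h
    · rw [h0, hp0]; exact hxz.le
    · rcases hcomp j h hjr with hc | hc
      · exact absurd hc (Nat.find_min hex (by omega))
      · exact hc
  exact (hadj j hjr).1 (by rw [hji]; exact hpjz.trans hspec)
end

section
/- Let P be a poset and G its incomparability graph. If a ball B_G(x, r) (with r ∈ ℕ) contains infinitely many vertices of a one-way infinite induced path of G, then it contains all but finitely many vertices of that path. -/
/-- Core lemma: given a walk from `x` to `q` and `u ≤ q`, either there is a walk
from `x` to `u` of no greater length, or `u ≤ x`. -/
lemma core {V : Type*} [PartialOrder V] {x q u : V} (w : (incompGraph V).Walk x q)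
    (hu : u ≤ q) : (∃ w' : (incompGraph V).Walk x u, w'.length ≤ w.length) ∨ u ≤ x := by
  induction w with
  | nil => exact Or.inr hu
  | @cons x v q h p ih =>
    rcases ih hu with ⟨w', hw'⟩ | huv
    · exact Or.inl ⟨(SimpleGraph.Walk.cons h w'), by simpa using Nat.succ_le_succ hw'⟩
    · by_cases hux : u ≤ x
      · exact Or.inr hux
      · by_cases hxu : x ≤ u
        · exact absurd (hxu.trans huv) h.1
        · exact Or.inl ⟨SimpleGraph.Walk.cons ⟨hxu, hux⟩ SimpleGraph.Walk.nil, Nat.succ_le_succ (Nat.zero_le _)⟩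

/-- Dual core lemma. -/
lemma core' {V : Type*} [PartialOrder V] {x q u : V} (w : (incompGraph V).Walk x q)
    (hu : q ≤ u) : (∃ w' : (incompGraph V).Walk x u, w'.length ≤ w.length) ∨ x ≤ u := by
  induction w with
  | nil => exact Or.inr hu
  | @cons x v q h p ih =>
    rcases ih hu with ⟨w', hw'⟩ | huv
    · exact Or.inl ⟨(SimpleGraph.Walk.cons h w'), by simpa using Nat.succ_le_succ hw'⟩
    · by_cases hux : u ≤ x
      · exact absurd (huv.trans hux) h.2
      · by_cases hxu : x ≤ u
        · exact Or.inr hxu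
        · exact Or.inl ⟨SimpleGraph.Walk.cons ⟨hxu, hux⟩ SimpleGraph.Walk.nil, Nat.succ_le_succ (Nat.zero_le _)⟩

/-- Sandwich lemma: if `p ≤ u ≤ q` and both `p, q` lie in the ball of radius `r`
around `x`, then so does `u`. -/
lemma sandwich {V : Type*} [PartialOrder V] {x p q u : V} {r : ℕ}
    (hp : (incompGraph V).edist x p ≤ (r : ℕ∞)) (hq : (incompGraph V).edist x q ≤ (r : ℕ∞))
    (h1 : p ≤ u) (h2 : u ≤ q) : (incompGraph V).edist x u ≤ (r : ℕ∞) := by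
  obtain ⟨wq, hwq⟩ := SimpleGraph.exists_walk_of_edist_ne_top
    (by intro h; rw [h] at hq; exact absurd hq (by simp))
  obtain ⟨wp, hwp⟩ := SimpleGraph.exists_walk_of_edist_ne_top
    (by intro h; rw [h] at hp; exact absurd hp (by simp))
  rcases core wq h2 with ⟨w', hw'⟩ | hux
  · calc (incompGraph V).edist x u ≤ w'.length := SimpleGraph.edist_le w'
      _ ≤ wq.length := by exact_mod_cast hw'
      _ ≤ (r : ℕ∞) := by rw [hwq]; exact hq
  · rcases core' wp h1 with ⟨w', hw'⟩ | hxu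
    · calc (incompGraph V).edist x u ≤ w'.length := SimpleGraph.edist_le w'
        _ ≤ wp.length := by exact_mod_cast hw'
        _ ≤ (r : ℕ∞) := by rw [hwp]; exact hp
    · have : x = u := le_antisymm hxu hux
      subst this; simp

/-- If the induced ray is increasing at the start, it is increasing everywhere
(at gap at least 2). -/
lemma mono_of_chain {V : Type*} [PartialOrder V] (a : ℕ → V)
    (hpath : ∀ i j : ℕ, (incompGraph V).Adj (a i) (a j) ↔ (i + 1 = j ∨ j + 1 = i))
    (h02 : a 0 ≤ a 2) : ∀ i j, i + 2 ≤ j → a i ≤ a j := by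
  have comp : ∀ i j, i + 2 ≤ j → a i ≤ a j ∨ a j ≤ a i := by
    intro i j hij
    by_contra hc
    push_neg at hc
    have : (incompGraph V).Adj (a i) (a j) := ⟨hc.1, hc.2⟩
    rcases (hpath i j).1 this with h | h <;> omega
  have adj : ∀ i, (incompGraph V).Adj (a i) (a (i + 1)) := fun i => (hpath i (i+1)).2 (Or.inl rfl)
  have stepA : ∀ i j, i + 2 ≤ j → a i ≤ a j → a i ≤ a (j + 1) := by
    intro i j hij hle
    rcases comp i (j + 1) (by omega) with h | h
    · exact h
    · exact absurd (h.trans hle) (adj j).2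
  have ext : ∀ i j, i + 2 ≤ j → a i ≤ a (i + 2) → a i ≤ a j := by
    intro i j hij hbase
    induction j with
    | zero => omega
    | succ j ih =>
      rcases Nat.lt_or_ge (i + 2) (j + 1) with h | h
      · exact stepA i j (by omega) (ih (by omega))
      · have : j + 1 = i + 2 := by omega
        rw [this]; exact hbase
  have base : ∀ i, a i ≤ a (i + 2) := by
    intro i
    induction i with
    | zero => exact h02
    | succ i ih =>
      -- a i ≤ a (i+3) by stepA, then a (i+1) ≤ a (i+3)
      have h3 : a i ≤ a (i + 3) := stepA i (i + 2) (by omega) ih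
      rcases comp (i + 1) (i + 3) (by omega) with h | h
      · exact h
      · exact absurd (h3.trans h) (adj i).1
  intro i j hij
  exact ext i j hij (base i)

theorem stmt12 {V : Type*} [PartialOrder V] (a : ℕ → V)
    (hinj : Function.Injective a)
    (hpath : ∀ i j : ℕ, (incompGraph V).Adj (a i) (a j) ↔ (i + 1 = j ∨ j + 1 = i))
    (x : V) (r : ℕ)
    (hinf : {n : ℕ | (incompGraph V).edist x (a n) ≤ (r : ℕ∞)}.Infinite) :
    {n : ℕ | ¬ (incompGraph V).edist x (a n) ≤ (r : ℕ∞)}.Finite := by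
  -- vertices at gap ≥ 2 on the ray are comparable
  have comp02 : a 0 ≤ a 2 ∨ a 2 ≤ a 0 := by
    by_contra hc
    push_neg at hc
    rcases (hpath 0 2).1 ⟨hc.1, hc.2⟩ with h | h <;> omega
  obtain ⟨n0, hn0⟩ := hinf.nonempty
  -- every index k ≥ n0 + 2 lies in the ball
  have key : ∀ k, n0 + 2 ≤ k → (incompGraph V).edist x (a k) ≤ (r : ℕ∞) := by
    intro k hk
    obtain ⟨m, hm, hmk⟩ := hinf.exists_gt (k + 1)
    rcases comp02 with h02 | h02
    · have mono := mono_of_chain a hpath h02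
      exact sandwich hn0 hm (mono n0 k hk) (mono k m (by omega))
    · have hpath' : ∀ i j : ℕ, (incompGraph Vᵒᵈ).Adj (OrderDual.toDual (a i))
          (OrderDual.toDual (a j)) ↔ (i + 1 = j ∨ j + 1 = i) := by
        intro i j
        constructor
        · rintro ⟨h1, h2⟩; exact (hpath i j).1 ⟨h2, h1⟩
        · intro h; obtain ⟨h1, h2⟩ := (hpath i j).2 h; exact ⟨h2, h1⟩
      have mono' := mono_of_chain (fun n => OrderDual.toDual (a n)) hpath' h02
      exact sandwich hm hn0 (mono' k m (by omega)) (mono' n0 k hk)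
  apply Set.Finite.subset (Set.finite_Iio (n0 + 2))
  intro k hk
  simp only [Set.mem_setOf_eq] at hk
  by_contra hk2
  simp only [Set.mem_Iio, not_lt] at hk2
  exact hk (key k hk2)
end

section
/- Let P = (V, ≤) be a poset whose incomparability graph G is connected, and let x ∈ V be such that {d_G(x, y) : x < y} is unbounded in ℕ. Then for every z ∈ V with x < z, the set {d_G(z, y) : z < y} is also unbounded in ℕ. In particular z is not maximal in P. -/
private lemma incomp_walk_lemma {V : Type*} [PartialOrder V] :
    ∀ {b w : V} (p : (incompGraph V).Walk b w) (a : V), a < b →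
      a < w ∨ (incompGraph V).dist a w ≤ p.length := by
  intro b w p
  induction p with
  | nil => intro a hab; exact Or.inl hab
  | cons h q ih =>
    intro a hab
    rename_i b' c w'
    have hcb : ¬ c ≤ b' := h.2
    have hca : ¬ c ≤ a := fun hca => hcb (hca.trans hab.le)
    by_cases hac : a ≤ c
    · have : a < c := lt_of_le_of_ne hac (fun e => hca (e ▸ le_rfl))
      rcases ih a this with h1 | h2
      · exact Or.inl h1
      · exact Or.inr (h2.trans (by simp [SimpleGraph.Walk.length_cons]))
    · have hadj : (incompGraph V).Adj a c := ⟨hac, hca⟩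
      right
      have := SimpleGraph.dist_le (SimpleGraph.Walk.cons hadj q)
      simpa using this

theorem stmt14 {V : Type*} [PartialOrder V]
    (hconn : (incompGraph V).Connected) (x : V)
    (hx : ∀ n : ℕ, ∃ y : V, x < y ∧ n ≤ (incompGraph V).dist x y) :
    ∀ z : V, x < z →
      (∀ n : ℕ, ∃ y : V, z < y ∧ n ≤ (incompGraph V).dist z y) ∧ ¬ IsMax z := by
  intro z hxz
  have G := incompGraph V
  have key : ∀ n : ℕ, ∃ y : V, z < y ∧ n ≤ (incompGraph V).dist z y := by
    intro n
    set G := incompGraph V with hG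
    obtain ⟨y, hxy, hdy⟩ := hx (n + G.dist x z + 2)
    -- triangle: dist x y ≤ dist x z + dist z y
    have htri : G.dist x y ≤ G.dist x z + G.dist z y :=
      hconn.dist_triangle
    have hzy2 : 2 ≤ G.dist z y := by omega
    have hzyn : n ≤ G.dist z y := by omega
    have hzny : z ≠ y := by
      intro e; rw [e] at hzy2; simp [SimpleGraph.dist_self] at hzy2
    have hnadj : ¬ G.Adj z y := by
      intro hadj
      have := SimpleGraph.dist_eq_one_iff_adj.mpr hadj
      omega
    -- z and y are comparable
    have hcomp : z ≤ y ∨ y ≤ z := by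
      by_contra hc
      push_neg at hc
      exact hnadj ⟨hc.1, hc.2⟩
    rcases hcomp with h1 | h2
    · exact ⟨y, lt_of_le_of_ne h1 hzny, hzyn⟩
    · -- y < z : derive a contradiction
      exfalso
      have hyz : y < z := lt_of_le_of_ne h2 (fun e => hzny e.symm)
      obtain ⟨p, hp⟩ := hconn.exists_walk_length_eq_dist z x
      rcases incomp_walk_lemma p y hyz with h1 | h2
      · exact absurd h1 (asymm hxy)
      · rw [hp] at h2
        rw [← hG] at h2
        have hsym : G.dist y x = G.dist x y := SimpleGraph.dist_comm ..
        have hzx : G.dist z x = G.dist x z := SimpleGraph.dist_comm ..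
        omega
  refine ⟨key, ?_⟩
  obtain ⟨y, hzy, _⟩ := key 0
  exact fun hmax => absurd (hmax hzy.le) hzy.not_ge
end

section
/- Let P = (V, ≤) be an interval order (a poset not embedding 2 ⊕ 2) and x ∈ V. Consider vertices y incomparable to x such that there exists an induced path x = x_0, x_1 = y, x_2, ..., x_n of length n ≥ 2 in the incomparability graph of P, all of whose vertices lie in {z : z incomparable to x} ∪ {z : x ≤ z}. Then the set of all such vertices y forms an antichain in P. -/
theorem stmt16 {V : Type*} [PartialOrder V]
    (hint : ¬ ∃ a b c d : V, a < b ∧ c < d ∧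
        ¬ a ≤ c ∧ ¬ c ≤ a ∧ ¬ a ≤ d ∧ ¬ d ≤ a ∧
        ¬ b ≤ c ∧ ¬ c ≤ b ∧ ¬ b ≤ d ∧ ¬ d ≤ b)
    (x : V) :
    IsAntichain (· ≤ ·)
      {y : V | ∃ (n : ℕ) (p : ℕ → V), 2 ≤ n ∧ p 0 = x ∧ p 1 = y ∧
        (∀ i ≤ n, (¬ x ≤ p i ∧ ¬ p i ≤ x) ∨ x ≤ p i) ∧
        (∀ i ≤ n, ∀ j ≤ n, p i = p j → i = j) ∧
        (∀ i ≤ n, ∀ j ≤ n,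
          (incompGraph V).Adj (p i) (p j) ↔ (i + 1 = j ∨ j + 1 = i))} := by
  rintro y₁ ⟨n, p, hn, h0, h1, hcmp, hinj, hadj⟩ y₂ ⟨m, q, hm, g0, g1, _, _, gadj⟩ hne hle
  have h0n : 0 ≤ n := Nat.zero_le n
  have h1n : 1 ≤ n := le_trans (by norm_num) hn
  -- y₁ incomparable to x
  have hxy1 : (incompGraph V).Adj x y₁ := by
    rw [← h0, ← h1]; exact (hadj 0 h0n 1 h1n).2 (Or.inl rfl)
  -- y₂ incomparable to x
  have hxy2 : (incompGraph V).Adj x y₂ := by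
    rw [← g0, ← g1]
    exact (gadj 0 (Nat.zero_le m) 1 (le_trans (by norm_num) hm)).2 (Or.inl rfl)
  set z := p 2 with hz
  -- x ≤ z
  have hnadj : ¬ (incompGraph V).Adj x z := by
    rw [← h0]
    intro h
    rcases (hadj 0 h0n 2 hn).1 h with h' | h' <;> omega
  have hxz : x ≤ z := by
    rcases hcmp 2 hn with h | h
    · exact absurd ⟨h.1, h.2⟩ hnadj
    · exact h
  have hzx : x ≠ z := by
    intro h
    have := hinj 0 h0n 2 hn (by rw [h0, h])
    omega
  -- z incomparable to y₁
  have hy1z : (incompGraph V).Adj y₁ z := by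
    rw [← h1]; exact (hadj 1 h1n 2 hn).2 (Or.inl rfl)
  -- z incomparable to y₂
  have hy2z : (incompGraph V).Adj y₂ z := by
    constructor
    · intro h; exact hy1z.1 (le_trans hle h)
    · intro h; exact hxy2.1 (le_trans hxz h)
  exact hint ⟨x, z, y₁, y₂, lt_of_le_of_ne hxz hzx, lt_of_le_of_ne hle hne,
    hxy1.1, hxy1.2, hxy2.1, hxy2.2, hy1z.2, hy1z.1, hy2z.2, hy2z.1⟩
end

section
/- Let P = (V, ≤) be a poset, G its incomparability graph, X ⊆ V, and r ∈ ℕ. Then B_G(↓X, r) = (↓X) ∪ B_G(X, r) = ↓(B_G(X, r)), where ↓X denotes the downward closure of X in P. -/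
/-- `ballSet G X r` is the set of vertices at graphic distance at most `r`
from some vertex of `X` (distance `⊤` if no path exists). -/
def ballSet {V : Type*} (G : SimpleGraph V) (X : Set V) (r : ℕ) : Set V :=
  {v | ∃ x ∈ X, G.edist v x ≤ (r : ℕ∞)}

/-- The downward closure of a set in a poset. -/
def downSet {V : Type*} [PartialOrder V] (X : Set V) : Set V :=
  {y | ∃ x ∈ X, y ≤ x}

lemma walk_key {V : Type*} [PartialOrder V] {v y x : V}
    (p : (incompGraph V).Walk v y) (hyx : y ≤ x) :
    v ≤ x ∨ ∃ q : (incompGraph V).Walk v x, q.length ≤ p.length := by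
  induction p with
  | nil => exact Or.inl hyx
  | @cons v w y h p ih =>
    rcases ih hyx with hwx | ⟨q, hq⟩
    · by_cases hvx : v ≤ x
      · exact Or.inl hvx
      · right
        have hxv : ¬ x ≤ v := fun hxv => h.2 (hwx.trans hxv)
        exact ⟨SimpleGraph.Walk.cons ⟨hvx, hxv⟩ SimpleGraph.Walk.nil, by
          exact Nat.succ_le_succ (Nat.zero_le _)⟩
    · exact Or.inr ⟨SimpleGraph.Walk.cons h q, by
        simp [SimpleGraph.Walk.length_cons]; omega⟩

lemma walk_key' {V : Type*} [PartialOrder V] {v y x : V}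
    (p : (incompGraph V).Walk v y) (hxy : x ≤ y) :
    x ≤ v ∨ ∃ q : (incompGraph V).Walk v x, q.length ≤ p.length := by
  induction p with
  | nil => exact Or.inl hxy
  | @cons v w y h p ih =>
    rcases ih hxy with hwx | ⟨q, hq⟩
    · by_cases hvx : x ≤ v
      · exact Or.inl hvx
      · right
        have hxv : ¬ v ≤ x := fun hvx' => h.1 (hvx'.trans hwx)
        exact ⟨SimpleGraph.Walk.cons ⟨hxv, hvx⟩ SimpleGraph.Walk.nil, by
          exact Nat.succ_le_succ (Nat.zero_le _)⟩
    · exact Or.inr ⟨SimpleGraph.Walk.cons h q, by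
        simp [SimpleGraph.Walk.length_cons]; omega⟩

lemma edist_key {V : Type*} [PartialOrder V] {v y x : V} {r : ℕ}
    (hd : (incompGraph V).edist v y ≤ (r : ℕ∞)) (hyx : y ≤ x) :
    v ≤ x ∨ (incompGraph V).edist v x ≤ (r : ℕ∞) := by
  have hne : (incompGraph V).edist v y ≠ ⊤ := fun h => by simp [h] at hd
  obtain ⟨p, hp⟩ := SimpleGraph.exists_walk_of_edist_ne_top hne
  rcases walk_key p hyx with h | ⟨q, hq⟩
  · exact Or.inl h
  · refine Or.inr (le_trans (SimpleGraph.edist_le q) ?_)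
    calc (q.length : ℕ∞) ≤ (p.length : ℕ∞) := by exact_mod_cast hq
      _ = (incompGraph V).edist v y := hp
      _ ≤ r := hd

lemma edist_key' {V : Type*} [PartialOrder V] {v y x : V} {r : ℕ}
    (hd : (incompGraph V).edist v y ≤ (r : ℕ∞)) (hxy : x ≤ y) :
    x ≤ v ∨ (incompGraph V).edist v x ≤ (r : ℕ∞) := by
  have hne : (incompGraph V).edist v y ≠ ⊤ := fun h => by simp [h] at hd
  obtain ⟨p, hp⟩ := SimpleGraph.exists_walk_of_edist_ne_top hne
  rcases walk_key' p hxy with h | ⟨q, hq⟩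
  · exact Or.inl h
  · refine Or.inr (le_trans (SimpleGraph.edist_le q) ?_)
    calc (q.length : ℕ∞) ≤ (p.length : ℕ∞) := by exact_mod_cast hq
      _ = (incompGraph V).edist v y := hp
      _ ≤ r := hd

theorem stmt18 {V : Type*} [PartialOrder V] (X : Set V) (r : ℕ) :
    ballSet (incompGraph V) (downSet X) r = downSet X ∪ ballSet (incompGraph V) X r ∧
    ballSet (incompGraph V) (downSet X) r = downSet (ballSet (incompGraph V) X r) := by
  have h1 : ballSet (incompGraph V) (downSet X) r ⊆ downSet X ∪ ballSet (incompGraph V) X r := by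
    rintro v ⟨y, ⟨x, hx, hyx⟩, hd⟩
    rcases edist_key hd hyx with h | h
    · exact Or.inl ⟨x, hx, h⟩
    · exact Or.inr ⟨x, hx, h⟩
  have h2 : downSet X ∪ ballSet (incompGraph V) X r ⊆ downSet (ballSet (incompGraph V) X r) := by
    rintro v (⟨x, hx, hvx⟩ | hv)
    · exact ⟨x, ⟨x, hx, by simp [SimpleGraph.edist_self]⟩, hvx⟩
    · exact ⟨v, hv, le_rfl⟩
  have h3 : downSet (ballSet (incompGraph V) X r) ⊆ ballSet (incompGraph V) (downSet X) r := by
    rintro v ⟨w, ⟨x, hx, hd⟩, hvw⟩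
    rw [SimpleGraph.edist_comm] at hd
    rcases edist_key' hd hvw with h | h
    · exact ⟨v, ⟨x, hx, h⟩, by simp [SimpleGraph.edist_self]⟩
    · exact ⟨x, ⟨x, hx, le_rfl⟩, by rwa [SimpleGraph.edist_comm]⟩
  exact ⟨Set.Subset.antisymm h1 (h2.trans h3),
    Set.Subset.antisymm (h1.trans h2) h3⟩
end
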